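/- Let σ ∈ S_{m+1} be a permutation of full support whose unique left descent is s_1. Then σ = s_1 s_2 ⋯ s_m, the ascending Coxeter element. -/

import Mathlib

/-- The support of `w`: the set of simple reflection indices appearing in some
(equivalently, any) reduced word for `w`. -/
def CoxeterSystem.supp {B W : Type*} [Group W] {M : CoxeterMatrix B}
    (cs : CoxeterSystem M W) (w : W) : Set B :=
  { i | ∃ ω : List B, cs.IsReduced ω ∧ cs.wordProd ω = w ∧ i ∈ ω }

namespace StmtAux

variable {m : ℕ}

/-- adjacent transposition -/
abbrev t (c : Fin m) : Equiv.Perm (Fin (m+1)) := Equiv.swap c.castSucc c.succ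

lemma t_lt (c : Fin m) {x y : Fin (m+1)} (h : x < y)
    (hne : ¬(x = c.castSucc ∧ y = c.succ)) : t c x < t c y := by
  have h1 : ((c.castSucc : Fin (m+1)) : ℕ) = (c : ℕ) := rfl
  have h2 : ((c.succ : Fin (m+1)) : ℕ) = (c : ℕ) + 1 := rfl
  simp only [t, Equiv.swap_apply_def]
  simp only [Fin.lt_def, Fin.ext_iff] at *
  split_ifs <;> omega

lemma t_apply_val (c : Fin m) (x : Fin (m+1)) :
    ((t c x : Fin (m+1)) : ℕ)
      = if (x:ℕ) = (c:ℕ) then (c:ℕ)+1 else if (x:ℕ) = (c:ℕ)+1 then (c:ℕ) else (x:ℕ) := by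
  have h1 : ((c.castSucc : Fin (m+1)) : ℕ) = (c : ℕ) := rfl
  have h2 : ((c.succ : Fin (m+1)) : ℕ) = (c : ℕ) + 1 := rfl
  simp only [t, Equiv.swap_apply_def]
  simp only [Fin.ext_iff] at *
  split_ifs <;> omega

/-- the inversion set of a permutation -/
def InvSet (σ : Equiv.Perm (Fin (m+1))) : Finset (Fin (m+1) × Fin (m+1)) :=
  Finset.univ.filter (fun p => p.1 < p.2 ∧ σ p.2 < σ p.1)

/-- the inversion number -/
def N (σ : Equiv.Perm (Fin (m+1))) : ℕ := (InvSet σ).card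

lemma mem_InvSet {σ : Equiv.Perm (Fin (m+1))} {p : Fin (m+1) × Fin (m+1)} :
    p ∈ InvSet σ ↔ p.1 < p.2 ∧ σ p.2 < σ p.1 := by
  simp [InvSet]

lemma N_one : N (1 : Equiv.Perm (Fin (m+1))) = 0 := by
  rw [N, Finset.card_eq_zero]
  ext p
  simp only [mem_InvSet, Finset.notMem_empty, iff_false, not_and]
  intro h
  simp only [Equiv.Perm.coe_one, id_eq]
  exact not_lt.2 h.le

lemma N_mul_t_asc {σ : Equiv.Perm (Fin (m+1))} {c : Fin m}
    (h : σ c.castSucc < σ c.succ) : N (σ * t c) = N σ + 1 := by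
  have hset : InvSet (σ * t c)
      = insert (c.castSucc, c.succ)
          ((InvSet σ).image (fun p => (t c p.1, t c p.2))) := by
    ext ⟨x, y⟩
    simp only [mem_InvSet, Finset.mem_insert, Finset.mem_image, Prod.mk.injEq, Prod.ext_iff]
    constructor
    · rintro ⟨hxy, hinv⟩
      by_cases hc : x = c.castSucc ∧ y = c.succ
      · exact Or.inl hc
      · refine Or.inr ⟨(t c x, t c y), ⟨⟨t_lt c hxy hc, ?_⟩, ?_, ?_⟩⟩
        · simpa [Equiv.Perm.mul_apply] using hinv
        · simp
        · simp
    · rintro (⟨hx, hy⟩ | ⟨⟨a, b⟩, ⟨hab, hinv⟩, ha, hb⟩)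
      · subst hx; subst hy
        refine ⟨c.castSucc_lt_succ, ?_⟩
        simpa [Equiv.Perm.mul_apply] using h
      · subst ha; subst hb
        have hne : ¬(a = c.castSucc ∧ b = c.succ) := by
          rintro ⟨rfl, rfl⟩; exact absurd hinv (not_lt.2 h.le)
        refine ⟨t_lt c hab hne, ?_⟩
        simpa [Equiv.Perm.mul_apply] using hinv
  have hinj : Function.Injective (fun p : Fin (m+1) × Fin (m+1) => (t c p.1, t c p.2)) := by
    intro p q hpq
    simp only [Prod.ext_iff] at hpq ⊢
    exact ⟨(t c).injective hpq.1, (t c).injective hpq.2⟩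
  have hnotmem : (c.castSucc, c.succ) ∉ (InvSet σ).image (fun p => (t c p.1, t c p.2)) := by
    simp only [Finset.mem_image, Prod.ext_iff, not_exists]
    rintro ⟨a, b⟩ ⟨hmem, ha, hb⟩
    rw [mem_InvSet] at hmem
    have ha' : a = c.succ := by
      have := congrArg (t c) ha; simpa [t] using this
    have hb' : b = c.castSucc := by
      have := congrArg (t c) hb; simpa [t] using this
    subst ha'; subst hb'
    exact absurd hmem.1 (not_lt.2 c.castSucc_lt_succ.le)
  rw [N, hset, Finset.card_insert_of_notMem hnotmem, Finset.card_image_of_injective _ hinj]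
  rfl

lemma N_mul_t_desc {σ : Equiv.Perm (Fin (m+1))} {c : Fin m}
    (h : σ c.succ < σ c.castSucc) : N σ = N (σ * t c) + 1 := by
  have h' : (σ * t c) c.castSucc < (σ * t c) c.succ := by
    simpa [Equiv.Perm.mul_apply, t] using h
  have := N_mul_t_asc h'
  rw [mul_assoc] at this
  simpa [t] using this

-- strict mono self map of Fin n is id
lemma strictMono_le {n : ℕ} {f : Fin n → Fin n} (hf : StrictMono f) :
    ∀ k : ℕ, ∀ x : Fin n, (x : ℕ) = k → k ≤ (f x : ℕ) := by
  intro k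
  induction k with
  | zero => intro x _; exact Nat.zero_le _
  | succ k ih =>
    intro x hx
    have hk : k < n := by omega
    have hlt : (⟨k, hk⟩ : Fin n) < x := by simp [Fin.lt_def, hx]
    have := ih ⟨k, hk⟩ rfl
    have := hf hlt
    simp only [Fin.lt_def] at this
    omega

lemma strictMono_perm_eq_one {σ : Equiv.Perm (Fin (m+1))}
    (hσ : StrictMono (σ : Fin (m+1) → Fin (m+1))) : σ = 1 := by
  have hinv : StrictMono (⇑(σ⁻¹)) := by
    intro a b hab
    rcases lt_trichotomy (σ⁻¹ a) (σ⁻¹ b) with h | h | h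
    · exact h
    · exact absurd (congrArg σ h) (by simp; omega)
    · have := hσ h
      simp only [Equiv.Perm.coe_inv, Equiv.apply_symm_apply] at this
      exact absurd hab (not_lt.2 this.le)
  ext x
  have h1 : (x : ℕ) ≤ (σ x : ℕ) := strictMono_le hσ x x rfl
  have h2 : (x : ℕ) ≤ ((σ⁻¹) x : ℕ) := strictMono_le hinv x x rfl
  have h3 : (σ x : ℕ) ≤ (x : ℕ) := by
    have : σ x ≤ σ ((σ⁻¹) x) := by
      rcases eq_or_lt_of_le (Fin.le_def.2 h2) with h | h
      · rw [← h]
      · exact (hσ h).le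
    simpa using this
  simp only [Equiv.Perm.coe_one, id_eq]
  omega

/-- a permutation with an ascent at every adjacent pair is strict mono -/
lemma strictMono_of_ascents {σ : Equiv.Perm (Fin (m+1))}
    (h : ∀ c : Fin m, σ c.castSucc < σ c.succ) :
    StrictMono (σ : Fin (m+1) → Fin (m+1)) := by
  have key : ∀ d : ℕ, ∀ x y : Fin (m+1), (y : ℕ) = (x : ℕ) + d + 1 → σ x < σ y := by
    intro d
    induction d with
    | zero =>
      intro x y hy
      have hx : (x : ℕ) < m := by omega
      have hxc : x = (⟨x, hx⟩ : Fin m).castSucc := by simp [Fin.ext_iff]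
      have hyc : y = (⟨x, hx⟩ : Fin m).succ := by simp [Fin.ext_iff]; omega
      have := h ⟨x, hx⟩
      rw [← hxc, ← hyc] at this
      exact this
    | succ d ih =>
      intro x y hy
      have hx : (x : ℕ) < m := by omega
      have h1 : σ x < σ ⟨(x:ℕ)+1, by omega⟩ := by
        have hxc : x = (⟨x, hx⟩ : Fin m).castSucc := by simp [Fin.ext_iff]
        have hyc : (⟨(x:ℕ)+1, by omega⟩ : Fin (m+1)) = (⟨x, hx⟩ : Fin m).succ := by
          simp [Fin.ext_iff]
        have := h ⟨x, hx⟩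
        rw [← hxc, ← hyc] at this
        exact this
      have h2 : σ ⟨(x:ℕ)+1, by omega⟩ < σ y := ih _ y (by simp; omega)
      exact h1.trans h2
  intro a b hab
  have : (b : ℕ) = (a : ℕ) + ((b : ℕ) - (a : ℕ) - 1) + 1 := by
    simp only [Fin.lt_def] at hab; omega
  exact key _ a b this

/-- crossing inversions at cut `c` -/
def CrossSet (c : Fin m) (σ : Equiv.Perm (Fin (m+1))) : Finset (Fin (m+1) × Fin (m+1)) :=
  Finset.univ.filter (fun p => p.1 ≤ c.castSucc ∧ c.castSucc < p.2 ∧ σ p.2 < σ p.1)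

lemma mem_CrossSet {c : Fin m} {σ : Equiv.Perm (Fin (m+1))} {p : Fin (m+1) × Fin (m+1)} :
    p ∈ CrossSet c σ ↔ p.1 ≤ c.castSucc ∧ c.castSucc < p.2 ∧ σ p.2 < σ p.1 := by
  simp [CrossSet]

lemma t_le_iff {c j : Fin m} (hjc : j ≠ c) (z : Fin (m+1)) :
    t j z ≤ c.castSucc ↔ z ≤ c.castSucc := by
  have h1 := t_apply_val j z
  have h2 : ((c.castSucc : Fin (m+1)) : ℕ) = (c : ℕ) := rfl
  have h3 : (j : ℕ) ≠ (c : ℕ) := fun h => hjc (Fin.ext h)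
  have h4 : (j : ℕ) < m := j.isLt
  have h5 : (c : ℕ) < m := c.isLt
  simp only [Fin.le_def, h2] at *
  split_ifs at h1 <;> omega

lemma t_lt_iff {c j : Fin m} (hjc : j ≠ c) (z : Fin (m+1)) :
    c.castSucc < t j z ↔ c.castSucc < z := by
  rw [← not_le, ← not_le, t_le_iff hjc z]

lemma card_CrossSet_mul_t_ne {c j : Fin m} (hjc : j ≠ c) (σ : Equiv.Perm (Fin (m+1))) :
    (CrossSet c (σ * t j)).card = (CrossSet c σ).card := by
  have hset : CrossSet c (σ * t j) = (CrossSet c σ).image (fun p => (t j p.1, t j p.2)) := by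
    ext ⟨x, y⟩
    simp only [mem_CrossSet, Finset.mem_image, Prod.ext_iff]
    constructor
    · rintro ⟨hx, hy, hinv⟩
      refine ⟨(t j x, t j y), ⟨?_, ?_, ?_⟩, by simp, by simp⟩
      · exact (t_le_iff hjc x).2 hx
      · exact (t_lt_iff hjc y).2 hy
      · simpa [Equiv.Perm.mul_apply] using hinv
    · rintro ⟨⟨a, b⟩, ⟨ha, hb, hinv⟩, ha', hb'⟩
      subst ha'; subst hb'
      refine ⟨(t_le_iff hjc a).2 ha, (t_lt_iff hjc b).2 hb, ?_⟩
      simpa [Equiv.Perm.mul_apply] using hinv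
  have hinj : Function.Injective (fun p : Fin (m+1) × Fin (m+1) => (t j p.1, t j p.2)) := by
    intro p q hpq
    simp only [Prod.ext_iff] at hpq ⊢
    exact ⟨(t j).injective hpq.1, (t j).injective hpq.2⟩
  rw [hset, Finset.card_image_of_injective _ hinj]

lemma card_CrossSet_mul_t_self {c : Fin m} {σ : Equiv.Perm (Fin (m+1))}
    (h : σ c.castSucc < σ c.succ) :
    (CrossSet c σ).card + 1 ≤ (CrossSet c (σ * t c)).card := by
  have hsub : insert (c.castSucc, c.succ) (CrossSet c σ) ⊆ CrossSet c (σ * t c) := by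
    intro p hp
    rcases Finset.mem_insert.1 hp with hp | hp
    · subst hp
      refine mem_CrossSet.2 ⟨le_refl _, c.castSucc_lt_succ, ?_⟩
      simpa [Equiv.Perm.mul_apply] using h
    · obtain ⟨hx, hy, hinv⟩ := mem_CrossSet.1 hp
      obtain ⟨x, y⟩ := p
      simp only at hx hy hinv
      refine mem_CrossSet.2 ⟨hx, hy, ?_⟩
      simp only [Equiv.Perm.mul_apply]
      have hyne : y ≠ c.castSucc := ne_of_gt hy
      rcases eq_or_ne y c.succ with rfl | hy2
      · rw [Equiv.swap_apply_right]
        rcases eq_or_ne x c.castSucc with rfl | hx2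
        · exact absurd hinv (not_lt.2 h.le)
        · have hx3 : x ≠ c.succ := fun hh => hx2 (by
            exfalso
            have := hx
            rw [hh] at this
            exact absurd c.castSucc_lt_succ (not_lt.2 this))
          rw [Equiv.swap_apply_of_ne_of_ne hx2 hx3]
          exact h.trans hinv
      · rw [Equiv.swap_apply_of_ne_of_ne hyne hy2]
        rcases eq_or_ne x c.castSucc with rfl | hx2
        · rw [Equiv.swap_apply_left]
          exact hinv.trans h
        · have hx3 : x ≠ c.succ := fun hh => hx2 (by
            exfalso
            have := hx
            rw [hh] at this
            exact absurd c.castSucc_lt_succ (not_lt.2 this))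
          rw [Equiv.swap_apply_of_ne_of_ne hx2 hx3]
          exact hinv
  have hnm : (c.castSucc, c.succ) ∉ CrossSet c σ := by
    intro hmem
    obtain ⟨_, _, hinv⟩ := mem_CrossSet.1 hmem
    exact absurd hinv (not_lt.2 h.le)
  calc (CrossSet c σ).card + 1 = (insert (c.castSucc, c.succ) (CrossSet c σ)).card := by
        rw [Finset.card_insert_of_notMem hnm]
  _ ≤ (CrossSet c (σ * t c)).card := Finset.card_le_card hsub

section WithCS

variable (cs : CoxeterSystem (CoxeterMatrix.Aₙ m) (Equiv.Perm (Fin (m + 1))))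
variable (hs : ∀ i : Fin m, cs.simple i = Equiv.swap i.castSucc i.succ)

omit cs hs in
lemma ascent_or_descent (σ : Equiv.Perm (Fin (m+1))) (c : Fin m) :
    σ c.castSucc < σ c.succ ∨ σ c.succ < σ c.castSucc := by
  rcases lt_trichotomy (σ c.castSucc) (σ c.succ) with h | h | h
  · exact Or.inl h
  · exact absurd (σ.injective h) (ne_of_lt c.castSucc_lt_succ)
  · exact Or.inr h

include hs

lemma eq_one_of_N_eq_zero {σ : Equiv.Perm (Fin (m+1))} (h : N σ = 0) : σ = 1 := by
  refine strictMono_perm_eq_one (strictMono_of_ascents (fun c => ?_))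
  rcases ascent_or_descent σ c with ha | hd
  · exact ha
  · exact absurd (N_mul_t_desc hd) (by omega)

lemma N_wordProd_le (ω : List (Fin m)) : N (cs.wordProd ω) ≤ ω.length := by
  induction ω using List.reverseRecOn with
  | nil => simp [cs.wordProd_nil, N_one]
  | append_singleton ω j ih =>
    rw [← List.concat_eq_append, cs.wordProd_concat, hs j]
    rcases ascent_or_descent (cs.wordProd ω) j with ha | hd
    · rw [show Equiv.swap j.castSucc j.succ = t j from rfl, N_mul_t_asc ha]
      simpa using Nat.add_le_add_right ih 1
    · show N (cs.wordProd ω * t j) ≤ (ω.concat j).length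
      have := N_mul_t_desc hd
      have hlen : (ω.concat j).length = ω.length + 1 := by simp
      omega

lemma length_le_N : ∀ n : ℕ, ∀ σ : Equiv.Perm (Fin (m+1)), N σ = n → cs.length σ ≤ n := by
  intro n
  induction n with
  | zero =>
    intro σ hσ
    rw [eq_one_of_N_eq_zero cs hs hσ, cs.length_one]
  | succ n ih =>
    intro σ hσ
    have hd : ∃ c : Fin m, σ c.succ < σ c.castSucc := by
      by_contra h
      push_neg at h
      have : σ = 1 := strictMono_perm_eq_one (strictMono_of_ascents (fun c =>
        (ascent_or_descent σ c).resolve_right (not_lt.2 (h c))))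
      rw [this] at hσ
      have := N_one (m := m)
      omega
    obtain ⟨c, hc⟩ := hd
    have hN : N (σ * t c) = n := by have := N_mul_t_desc hc; omega
    have h1 : cs.length (σ * t c) ≤ n := ih _ hN
    have h2 : σ = (σ * t c) * t c := by simp [mul_assoc, t]
    calc cs.length σ = cs.length ((σ * t c) * cs.simple c) := by rw [hs c]; exact congrArg _ h2
    _ ≤ cs.length (σ * t c) + cs.length (cs.simple c) := cs.length_mul_le _ _
    _ ≤ n + 1 := by rw [cs.length_simple]; omega

lemma length_eq_N (σ : Equiv.Perm (Fin (m+1))) : cs.length σ = N σ := by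
  refine le_antisymm (length_le_N cs hs _ σ rfl) ?_
  obtain ⟨ω, hred, hw⟩ := cs.exists_reduced_word' σ
  calc N σ = N (cs.wordProd ω) := by rw [← hw]
  _ ≤ ω.length := N_wordProd_le cs hs ω
  _ = cs.length σ := by rw [hw]; exact hred.symm ▸ rfl

lemma isRightDescent_iff' (σ : Equiv.Perm (Fin (m+1))) (c : Fin m) :
    cs.IsRightDescent σ c ↔ σ c.succ < σ c.castSucc := by
  unfold CoxeterSystem.IsRightDescent
  rw [hs c, length_eq_N cs hs, length_eq_N cs hs]
  rcases ascent_or_descent σ c with ha | hd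
  · have := N_mul_t_asc ha
    constructor
    · intro h; rw [show Equiv.swap c.castSucc c.succ = t c from rfl] at h; omega
    · intro h; exact absurd ha (not_lt.2 h.le)
  · have := N_mul_t_desc hd
    constructor
    · intro _; exact hd
    · intro h; rw [show Equiv.swap c.castSucc c.succ = t c from rfl]; omega

lemma cross_pos : ∀ (ω : List (Fin m)), cs.IsReduced ω → ∀ c : Fin m, c ∈ ω →
    1 ≤ (CrossSet c (cs.wordProd ω)).card := by
  intro ω
  induction ω using List.reverseRecOn with
  | nil => intro _ c hc; simp at hc
  | append_singleton ω j ih =>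
    intro hred c hc
    have hredω : cs.IsReduced ω := by
      have := hred.take ω.length
      rwa [List.take_left] at this
    have hπ : cs.wordProd (ω ++ [j]) = cs.wordProd ω * t j := by
      rw [← List.concat_eq_append, cs.wordProd_concat, hs j]
    have hasc : (cs.wordProd ω) j.castSucc < (cs.wordProd ω) j.succ := by
      rcases ascent_or_descent (cs.wordProd ω) j with h | h
      · exact h
      · exfalso
        have h1 : N (cs.wordProd ω) = N (cs.wordProd ω * t j) + 1 := N_mul_t_desc h
        have h2 : N (cs.wordProd ω) ≤ ω.length := N_wordProd_le cs hs ω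
        have h3 : N (cs.wordProd (ω ++ [j])) = (ω ++ [j]).length := by
          rw [← length_eq_N cs hs]; exact hred
        rw [hπ] at h3
        have h4 : (ω ++ [j]).length = ω.length + 1 := by simp
        omega
    rw [hπ]
    rcases eq_or_ne j c with rfl | hjc
    · have := card_CrossSet_mul_t_self hasc
      omega
    · rw [card_CrossSet_mul_t_ne hjc]
      rcases List.mem_append.1 hc with hc | hc
      · exact ih hredω c hc
      · simp only [List.mem_singleton] at hc
        exact absurd hc.symm hjc

end WithCS

end StmtAux

set_option maxHeartbeats 8000000 in
open StmtAux in
/-- A permutation in `S_{m+1}` of full support whose unique left descent is the first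
simple reflection `s_1` is the ascending Coxeter element `s_1 s_2 ⋯ s_m`. -/
theorem stmt_2 {m : ℕ} (hm : 1 ≤ m)
    (cs : CoxeterSystem (CoxeterMatrix.Aₙ m) (Equiv.Perm (Fin (m + 1))))
    (hs : ∀ i : Fin m, cs.simple i = Equiv.swap i.castSucc i.succ)
    (σ : Equiv.Perm (Fin (m + 1)))
    (hfull : cs.supp σ = Set.univ)
    (hdesc : cs.IsLeftDescent σ ⟨0, by omega⟩)
    (huniq : ∀ i : Fin m, cs.IsLeftDescent σ i → i = ⟨0, by omega⟩) :
    σ = cs.wordProd (List.finRange m) := by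
  classical
  set τ := σ⁻¹ with hτ
  -- ascents of τ away from 0
  have hasc : ∀ c : Fin m, c ≠ ⟨0, by omega⟩ → τ c.castSucc < τ c.succ := by
    intro c hc
    rcases ascent_or_descent τ c with h | h
    · exact h
    · exfalso
      have hrd : cs.IsRightDescent τ c := (isRightDescent_iff' cs hs τ c).2 h
      have hld : cs.IsLeftDescent σ c := by
        rw [hτ] at hrd
        exact (cs.isRightDescent_inv_iff).1 hrd
      exact hc (huniq c hld)
  -- σ moves the last point, by full support
  have hlastmem : (⟨m-1, by omega⟩ : Fin m) ∈ cs.supp σ := by rw [hfull]; trivial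
  obtain ⟨ω, hred, hw, hmem⟩ := hlastmem
  have hcross := cross_pos cs hs ω hred _ hmem
  rw [hw] at hcross
  obtain ⟨⟨x, y⟩, hp⟩ := Finset.card_pos.mp (lt_of_lt_of_le Nat.zero_lt_one hcross)
  obtain ⟨hx, hy, hinv⟩ := mem_CrossSet.1 hp
  simp only at hx hy hinv
  have hylast : y = Fin.last m := by
    have h2 : ((((⟨m-1, by omega⟩ : Fin m).castSucc : Fin (m+1))) : ℕ) < (y : ℕ) :=
      Fin.lt_def.1 hy
    have h1 : (((⟨m-1, by omega⟩ : Fin m).castSucc : Fin (m+1)) : ℕ) = m-1 := rfl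
    rw [h1] at h2
    have h3 := y.isLt
    apply Fin.ext
    simp only [Fin.val_last]
    omega
  have hσlast : σ (Fin.last m) < Fin.last m := by
    rw [hylast] at hinv
    exact lt_of_lt_of_le hinv (Fin.le_last _)
  have hτlast : (τ (Fin.last m) : ℕ) < m := by
    have hne : τ (Fin.last m) ≠ Fin.last m := by
      intro h
      have h2 := congrArg σ h
      rw [hτ] at h2
      simp only [Equiv.Perm.coe_inv, Equiv.apply_symm_apply] at h2
      rw [← h2] at hσlast
      exact lt_irrefl _ hσlast
    have h3 := Fin.le_last (τ (Fin.last m))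
    have h4 : (τ (Fin.last m) : ℕ) ≠ m := fun h => hne (Fin.ext (by simpa using h))
    have h5 := Fin.le_def.1 h3
    simp only [Fin.val_last] at h5
    omega
  -- value chain for τ
  have hA : ∀ a b : Fin (m+1), 1 ≤ (a:ℕ) → (b:ℕ) = (a:ℕ)+1 → τ a < τ b := by
    intro a b h1 h2
    have ham : (a:ℕ) < m := by have := b.isLt; omega
    have hc : (⟨(a:ℕ), ham⟩ : Fin m) ≠ ⟨0, by omega⟩ := by
      simp only [ne_eq, Fin.mk.injEq]; omega
    have h3 := hasc ⟨(a:ℕ), ham⟩ hc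
    have e1 : ((⟨(a:ℕ), ham⟩ : Fin m).castSucc) = a := Fin.ext rfl
    have e2 : ((⟨(a:ℕ), ham⟩ : Fin m).succ) = b := Fin.ext (by
      simp only [Fin.val_succ]; omega)
    rw [e1, e2] at h3
    exact h3
  have hD : ∀ d : ℕ, ∀ x : Fin (m+1), (x:ℕ) = m - d → 1 ≤ (x:ℕ) →
      (τ x : ℕ) ≤ (x:ℕ) - 1 := by
    intro d
    induction d with
    | zero =>
      intro x hx _
      have hxl : x = Fin.last m := Fin.ext (by simp only [Fin.val_last]; omega)
      rw [hxl]
      omega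
    | succ d ihd =>
      intro x hx h1
      have hxm : (x:ℕ) + 1 < m + 1 := by omega
      have hyval : ((⟨(x:ℕ)+1, hxm⟩ : Fin (m+1)) : ℕ) = (x:ℕ)+1 := rfl
      have h2 := ihd ⟨(x:ℕ)+1, hxm⟩ (by rw [hyval]; omega) (by rw [hyval]; omega)
      have h3 := hA x ⟨(x:ℕ)+1, hxm⟩ (by omega) hyval
      have h4 : (τ x : ℕ) < (τ ⟨(x:ℕ)+1, hxm⟩ : ℕ) := Fin.lt_def.1 h3
      rw [hyval] at h2
      omega
  have hE : ∀ k : ℕ, ∀ x : Fin (m+1), (x:ℕ) = k → 1 ≤ k → k ≤ m →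
      k - 1 ≤ (τ x : ℕ) := by
    intro k
    induction k with
    | zero => intro x _ h _; omega
    | succ k ihk =>
      intro x hx _ h2
      rcases Nat.eq_zero_or_pos k with rfl | hk
      · omega
      · have hkm : k < m + 1 := by omega
        have hwval : ((⟨k, hkm⟩ : Fin (m+1)) : ℕ) = k := rfl
        have h3 := ihk ⟨k, hkm⟩ hwval (by omega) (by omega)
        have h4 := hA ⟨k, hkm⟩ x (by rw [hwval]; omega) (by rw [hwval]; omega)
        have h5 := Fin.lt_def.1 h4
        omega
  have hV : ∀ x : Fin (m+1), 1 ≤ (x:ℕ) → (x:ℕ) ≤ m → (τ x : ℕ) = (x:ℕ) - 1 := by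
    intro x h1 h2
    have h3 := hE (x:ℕ) x rfl h1 h2
    have h4 := hD (m - (x:ℕ)) x (by omega) h1
    omega
  have hV0 : ∀ x : Fin (m+1), (x:ℕ) = 0 → (τ x : ℕ) = m := by
    intro x hx0
    by_contra hne
    have hub : (τ x : ℕ) < m := by have := (τ x).isLt; omega
    have hvm : (τ x : ℕ) + 1 < m + 1 := by omega
    have hval : ((⟨(τ x : ℕ)+1, hvm⟩ : Fin (m+1)) : ℕ) = (τ x : ℕ)+1 := rfl
    have h1 := hV ⟨(τ x : ℕ)+1, hvm⟩ (by rw [hval]; omega) (by rw [hval]; omega)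
    rw [hval] at h1
    have h2 : τ (⟨(τ x : ℕ)+1, hvm⟩ : Fin (m+1)) = τ x := Fin.ext (by rw [h1]; omega)
    have h3 := τ.injective h2
    have h4 : (τ x : ℕ)+1 = (x:ℕ) := congrArg Fin.val h3
    omega
  -- values of σ
  have hσval : ∀ x : Fin (m+1), (σ x : ℕ) = if (x : ℕ) = m then 0 else (x : ℕ) + 1 := by
    intro x
    have h0m : (0:ℕ) < m + 1 := by omega
    rcases eq_or_ne ((x : ℕ)) m with hxm | hxm
    · have h1 := hV0 ⟨0, h0m⟩ rfl
      have h2 : τ ⟨0, h0m⟩ = x := Fin.ext (by rw [h1]; omega)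
      have h4 := congrArg σ h2
      rw [hτ] at h4
      simp only [Equiv.Perm.coe_inv, Equiv.apply_symm_apply] at h4
      rw [← h4, if_pos hxm]
    · have hxlt : (x : ℕ) < m := by have := x.isLt; omega
      have hxm1 : (x:ℕ) + 1 < m + 1 := by omega
      have hval : ((⟨(x:ℕ)+1, hxm1⟩ : Fin (m+1)) : ℕ) = (x:ℕ)+1 := rfl
      have h1 := hV ⟨(x:ℕ)+1, hxm1⟩ (by rw [hval]; omega) (by rw [hval]; omega)
      rw [hval] at h1
      have h2 : τ ⟨(x:ℕ)+1, hxm1⟩ = x := Fin.ext (by rw [h1]; omega)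
      have h4 := congrArg σ h2
      rw [hτ] at h4
      simp only [Equiv.Perm.coe_inv, Equiv.apply_symm_apply] at h4
      rw [← h4, if_neg hxm]
  -- values of the target
  have hW : ∀ k : ℕ, k ≤ m → ∀ x : Fin (m+1),
      ((cs.wordProd ((List.finRange m).take k)) x : ℕ)
        = if (x:ℕ) < k then (x:ℕ)+1 else if (x:ℕ) = k then 0 else (x:ℕ) := by
    intro k
    induction k with
    | zero =>
      intro _ x
      simp only [List.take_zero, cs.wordProd_nil, Equiv.Perm.coe_one, id_eq]
      split_ifs <;> omega
    | succ k ihk =>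
      intro hk x
      have hkm : k < m := by omega
      have htake : (List.finRange m).take (k+1)
          = (List.finRange m).take k ++ [⟨k, hkm⟩] := by
        rw [List.take_succ]
        congr 1
        have hlen : k < (List.finRange m).length := by simp [hkm]
        rw [List.getElem?_eq_getElem hlen]
        simp [List.getElem_finRange, Fin.ext_iff]
      rw [htake, ← List.concat_eq_append, cs.wordProd_concat, hs ⟨k, hkm⟩,
        Equiv.Perm.mul_apply]
      have h1 : ((t ⟨k, hkm⟩ x : Fin (m+1)) : ℕ)
          = if (x:ℕ) = k then k+1 else if (x:ℕ) = k+1 then k else (x:ℕ) :=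
        t_apply_val ⟨k, hkm⟩ x
      have h2 := ihk (by omega) (t ⟨k, hkm⟩ x)
      rw [show Equiv.swap (⟨k, hkm⟩ : Fin m).castSucc (⟨k, hkm⟩ : Fin m).succ = t ⟨k, hkm⟩
        from rfl]
      rw [h2]
      split_ifs at h1 ⊢ <;> omega
  -- conclude
  have hfin : (List.finRange m).take m = List.finRange m := by
    apply List.take_of_length_le
    simp
  apply Equiv.ext
  intro x
  apply Fin.ext
  have h1 := hW m le_rfl x
  rw [hfin] at h1
  rw [hσval x, h1]
  have := x.isLt
  split_ifs <;> omega
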